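/- arXiv:math/0611034 — 2 statements merged into one kernel-verified Lean document; each statement's English description precedes it below -/
import Mathlib

section
/- Let G be an infinite-dimensional real separable Hilbert space with complete orthonormal system (τ_j)_{j≥0}, I a compact interval, and f : I → G continuous. Write f_j(t) = ⟨f(t), τ_j⟩. If for each j there is a real polynomial p_j with ‖f_j − p_j‖_{L^∞(I)} < ε/(j+1), then for all sufficiently large n the G-valued polynomial q_n(t) = Σ_{j=0}^{n} p_j(t) τ_j satisfies sup_{t∈I} ‖f(t) − q_n(t)‖_G ≤ ε(1 + (Σ_{j=0}^∞ 1/(j+1)²)^{1/2}). -/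
open Finset RealInnerProductSpace

lemma norm_sum_sq_orth {G : Type*} [NormedAddCommGroup G] [InnerProductSpace ℝ G]
    {v : ℕ → G} (hv : Orthonormal ℝ v) (c : ℕ → ℝ) (s : Finset ℕ) :
    ‖∑ i ∈ s, c i • v i‖ ^ 2 = ∑ i ∈ s, (c i) ^ 2 := by
  have := hv.orthogonalFamily.norm_sum c s
  simpa [LinearIsometry.toSpanSingleton_apply, Real.norm_eq_abs, sq_abs] using this

/-- If the coordinates `f_j = ⟪f(·), τ_j⟫` of a continuous `G`-valued function are
uniformly approximated by real polynomials `p_j` with error `< ε/(j+1)`, then the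
partial sums `q_n(t) = Σ_{j≤n} p_j(t) τ_j` approximate `f` uniformly on `I` with error
at most `ε(1 + (Σ_j 1/(j+1)²)^{1/2})` for all sufficiently large `n`. -/
theorem approx_infinite_dim (G : Type*) [NormedAddCommGroup G] [InnerProductSpace ℝ G]
    [CompleteSpace G] (τ : HilbertBasis ℕ ℝ G)
    (a b : ℝ) (hab : a ≤ b) (f : ℝ → G) (hf : ContinuousOn f (Set.Icc a b))
    (ε : ℝ) (hε : 0 < ε) (p : ℕ → Polynomial ℝ)
    (hp : ∀ j : ℕ, ∀ t ∈ Set.Icc a b, |⟪f t, τ j⟫ - (p j).eval t| < ε / (j + 1)) :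
    ∃ m₀ : ℕ, ∀ n ≥ m₀, ∀ t ∈ Set.Icc a b,
      ‖f t - ∑ j ∈ Finset.range (n + 1), (p j).eval t • τ j‖
        ≤ ε * (1 + Real.sqrt (∑' j : ℕ, 1 / ((j : ℝ) + 1) ^ 2)) := by
  classical
  set S : ℝ := ∑' j : ℕ, 1 / ((j : ℝ) + 1) ^ 2 with hS
  have hsum : Summable (fun j : ℕ => 1 / ((j : ℝ) + 1) ^ 2) := by
    have h2 : Summable (fun n : ℕ => 1 / (n : ℝ) ^ 2) :=
      Real.summable_one_div_nat_pow.mpr one_lt_two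
    have := (summable_nat_add_iff 1).mpr h2
    simpa [add_comm] using this
  have hS0 : 0 ≤ S := tsum_nonneg (fun j => by positivity)
  -- partial sums bounded by S
  have hpart : ∀ m : ℕ, ∑ j ∈ Finset.range m, 1 / ((j : ℝ) + 1) ^ 2 ≤ S :=
    fun m => Summable.sum_le_tsum (Finset.range m) (fun j _ => by positivity) hsum
  -- projections
  set P : ℕ → G → G := fun n x => ∑ j ∈ Finset.range (n + 1), ⟪x, τ j⟫ • τ j with hPdef
  have hP_tendsto : ∀ x : G, Filter.Tendsto (fun n => P n x) Filter.atTop (nhds x) := by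
    intro x
    have h := (τ.hasSum_repr x).tendsto_sum_nat
    have h' := h.comp (Filter.tendsto_add_atTop_nat 1)
    simp only [Function.comp] at h'
    convert h' using 2 with n
    refine Finset.sum_congr rfl fun j _ => ?_
    rw [τ.repr_apply_apply, real_inner_comm]
  have hP_lip : ∀ n : ℕ, ∀ x y : G, ‖P n x - P n y‖ ≤ ‖x - y‖ := by
    intro n x y
    have hxy : P n x - P n y = ∑ j ∈ Finset.range (n+1), ⟪x - y, τ j⟫ • τ j := by
      simp [hPdef, inner_sub_left, sub_smul, Finset.sum_sub_distrib]
    rw [hxy]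
    have h1 := norm_sum_sq_orth τ.orthonormal (fun j => ⟪x - y, τ j⟫) (Finset.range (n+1))
    have h2 : ∑ j ∈ Finset.range (n+1), (⟪x - y, τ j⟫ : ℝ) ^ 2 ≤ ‖x - y‖ ^ 2 := by
      have := τ.orthonormal.sum_inner_products_le (x - y) (s := Finset.range (n+1))
      simpa [Real.norm_eq_abs, sq_abs, real_inner_comm] using this
    nlinarith [norm_nonneg (∑ j ∈ Finset.range (n+1), (⟪x - y, τ j⟫ : ℝ) • τ j),
      norm_nonneg (x - y)]
  -- compactness / uniform tail bound
  have hK : IsCompact (f '' Set.Icc a b) := isCompact_Icc.image_of_continuousOn hf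
  have hε3 : 0 < ε / 3 := by linarith
  obtain ⟨F, hF⟩ := hK.elim_finite_subcover (fun y : G => Metric.ball y (ε / 3))
    (fun y => Metric.isOpen_ball)
    (fun x _ => Set.mem_iUnion.2 ⟨x, Metric.mem_ball_self hε3⟩)
  have hNex : ∀ y : G, ∃ N : ℕ, ∀ n ≥ N, dist (P n y) y < ε / 3 :=
    fun y => Metric.tendsto_atTop.mp (hP_tendsto y) (ε / 3) hε3
  choose N hN using hNex
  refine ⟨F.sup N, fun n hn t ht => ?_⟩
  -- tail bound at x = f t
  set x := f t with hx
  have hxK : x ∈ f '' Set.Icc a b := ⟨t, ht, rfl⟩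
  have htail : ‖x - P n x‖ ≤ ε := by
    obtain ⟨y, hyF, hxy⟩ := Set.mem_iUnion₂.mp (hF hxK)
    have hNy : N y ≤ n := le_trans (Finset.le_sup hyF) hn
    have h1 : ‖x - y‖ < ε / 3 := by
      simpa [dist_eq_norm] using hxy
    have h2 : ‖y - P n y‖ < ε / 3 := by
      have := hN y n hNy
      rwa [dist_eq_norm, norm_sub_rev] at this
    have h3 : ‖P n y - P n x‖ ≤ ‖y - x‖ := hP_lip n y x
    have h4 : ‖y - x‖ < ε / 3 := by rwa [norm_sub_rev] at h1
    calc ‖x - P n x‖ = ‖(x - y) + (y - P n y) + (P n y - P n x)‖ := by rw [show x - P n x = (x - y) + (y - P n y) + (P n y - P n x) by abel]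
      _ ≤ ‖x - y‖ + ‖y - P n y‖ + ‖P n y - P n x‖ := norm_add₃_le
      _ ≤ ε / 3 + ε / 3 + ε / 3 := by linarith
      _ = ε := by ring
  -- coordinate error bound
  have hcoord : ‖P n x - ∑ j ∈ Finset.range (n + 1), (p j).eval t • τ j‖ ≤ ε * Real.sqrt S := by
    have heq : P n x - ∑ j ∈ Finset.range (n + 1), (p j).eval t • τ j
        = ∑ j ∈ Finset.range (n + 1), (⟪x, τ j⟫ - (p j).eval t) • τ j := by
      simp [hPdef, sub_smul, Finset.sum_sub_distrib]
    rw [heq]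
    have h1 := norm_sum_sq_orth τ.orthonormal (fun j => ⟪x, τ j⟫ - (p j).eval t)
      (Finset.range (n+1))
    have h2 : ∑ j ∈ Finset.range (n+1), (⟪x, τ j⟫ - (p j).eval t) ^ 2
        ≤ ε ^ 2 * S := by
      calc ∑ j ∈ Finset.range (n+1), (⟪x, τ j⟫ - (p j).eval t) ^ 2
          ≤ ∑ j ∈ Finset.range (n+1), ε ^ 2 * (1 / ((j : ℝ) + 1) ^ 2) := by
            refine Finset.sum_le_sum fun j _ => ?_
            have hj := hp j t ht
            have hle : |⟪x, τ j⟫ - (p j).eval t| ≤ ε / ((j : ℝ) + 1) := le_of_lt hj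
            have hnn : (0:ℝ) ≤ ε / ((j : ℝ) + 1) := by positivity
            have := mul_self_le_mul_self (abs_nonneg _) hle
            have hsq : (⟪x, τ j⟫ - (p j).eval t) ^ 2 ≤ (ε / ((j : ℝ) + 1)) ^ 2 := by
              rw [← sq_abs]; nlinarith
            calc (⟪x, τ j⟫ - (p j).eval t) ^ 2 ≤ (ε / ((j : ℝ) + 1)) ^ 2 := hsq
              _ = ε ^ 2 * (1 / ((j : ℝ) + 1) ^ 2) := by field_simp
        _ = ε ^ 2 * ∑ j ∈ Finset.range (n+1), 1 / ((j : ℝ) + 1) ^ 2 := by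
            rw [Finset.mul_sum]
        _ ≤ ε ^ 2 * S := by
            have := hpart (n+1)
            nlinarith [sq_nonneg ε]
    have h3 : ‖∑ j ∈ Finset.range (n+1), (⟪x, τ j⟫ - (p j).eval t) • τ j‖ ^ 2
        ≤ (ε * Real.sqrt S) ^ 2 := by
      rw [h1, mul_pow, Real.sq_sqrt hS0]
      exact h2
    have h4 : (0:ℝ) ≤ ε * Real.sqrt S := by positivity
    nlinarith [norm_nonneg (∑ j ∈ Finset.range (n+1), (⟪x, τ j⟫ - (p j).eval t) • τ j)]
  calc ‖f t - ∑ j ∈ Finset.range (n + 1), (p j).eval t • τ j‖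
      = ‖(x - P n x) + (P n x - ∑ j ∈ Finset.range (n + 1), (p j).eval t • τ j)‖ := by
        rw [hx]; congr 1; abel
    _ ≤ ‖x - P n x‖ + ‖P n x - ∑ j ∈ Finset.range (n + 1), (p j).eval t • τ j‖ :=
        norm_add_le _ _
    _ ≤ ε + ε * Real.sqrt S := add_le_add htail hcoord
    _ = ε * (1 + Real.sqrt S) := by ring
end

section
/- Let w : ℝ → [0,∞] be a measurable weight and let a ∈ supp w satisfy esslim_{x→a⁺} w(x) = 0 (a type-1 right singularity). Then every f ∈ L^∞(supp w, w) which is a uniform-in-weighted-norm limit of continuous functions g_n ∈ C(ℝ) ∩ L^∞(w) satisfies esslimsup_{x→a⁺} |f(x) − f(a)| w(x) = 0. -/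
open MeasureTheory ENNReal Filter

/-- Necessity of the singularity condition: if `a ∈ supp w` is a right singularity of
type 1 (the essential limit of `w` as `x → a⁺` is `0`) and `f ∈ L^∞(supp w, w)` is a
limit in the weighted norm of continuous functions, then the essential limsup of
`|f(x) − f(a)| w(x)` as `x → a⁺` is `0`. -/
theorem esslimsup_zero_at_type1_singularity (w : ℝ → ℝ) (hwmeas : Measurable w)
    (hw0 : ∀ x, 0 ≤ w x) (f : ℝ → ℝ) (hfmeas : Measurable f)
    (a : ℝ) (ha : a ∈ tsupport w)
    (hsing : Filter.Tendsto w (nhdsWithin a (Set.Ioi a) ⊓ MeasureTheory.ae (volume : Measure ℝ)) (nhds 0))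
    (hfL : essSup (fun x => ENNReal.ofReal (|f x| * w x)) (volume.restrict (tsupport w)) < ⊤)
    (hf : ∀ ε : ℝ, 0 < ε → ∃ g : ℝ → ℝ, Continuous g ∧
      essSup (fun x => ENNReal.ofReal (|g x| * w x)) (volume.restrict (tsupport w)) < ⊤ ∧
      essSup (fun x => ENNReal.ofReal (|f x - g x| * w x))
        (volume.restrict (tsupport w)) ≤ ENNReal.ofReal ε) :
    Filter.limsup (fun x => ENNReal.ofReal (|f x - f a| * w x))
      (nhdsWithin a (Set.Ioi a) ⊓ MeasureTheory.ae (volume : Measure ℝ)) = 0 := by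
  set l := nhdsWithin a (Set.Ioi a) ⊓ MeasureTheory.ae (volume : Measure ℝ) with hl
  have hl_le_nhds : l ≤ nhds a := le_trans inf_le_left nhdsWithin_le_nhds
  have hl_le_ae : l ≤ MeasureTheory.ae (volume : Measure ℝ) := inf_le_right
  have key : ∀ ε : ℝ, 0 < ε →
      Filter.limsup (fun x => ENNReal.ofReal (|f x - f a| * w x)) l ≤ ENNReal.ofReal (3 * ε) := by
    intro ε hε
    obtain ⟨g, hg, hgL, hfg⟩ := hf ε hε
    set C := |g a - f a| with hC
    have hCpos : 0 ≤ C := abs_nonneg _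
    set δ := min ε (ε / (C + 1)) with hδdef
    have hδpos : 0 < δ := lt_min hε (div_pos hε (by linarith))
    -- `|f - g| * w ≤ ε` almost everywhere for the full measure
    have h1 : ∀ᵐ x ∂(volume : Measure ℝ), |f x - g x| * w x ≤ ε := by
      have h := ENNReal.ae_le_essSup (μ := volume.restrict (tsupport w))
        (f := fun x => ENNReal.ofReal (|f x - g x| * w x))
      have h' : ∀ᵐ x ∂(volume.restrict (tsupport w)),
          ENNReal.ofReal (|f x - g x| * w x) ≤ ENNReal.ofReal ε :=
        h.mono fun x hx => hx.trans hfg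
      rw [ae_restrict_iff' (isClosed_tsupport w).measurableSet] at h'
      filter_upwards [h'] with x hx
      by_cases hxs : x ∈ tsupport w
      · exact (ENNReal.ofReal_le_ofReal_iff hε.le).mp (hx hxs)
      · rw [image_eq_zero_of_notMem_tsupport hxs, mul_zero]; exact hε.le
    have h1' : ∀ᶠ x in l, |f x - g x| * w x ≤ ε := h1.filter_mono hl_le_ae
    -- continuity of g near a
    have h2 : ∀ᶠ x in l, |g x - g a| < 1 := by
      have := (hg.tendsto a).comp (tendsto_id.mono_left hl_le_nhds)
      have hb := this.eventually (Metric.ball_mem_nhds (g a) one_pos)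
      filter_upwards [hb] with x hx
      simpa [Real.dist_eq] using hx
    -- smallness of w near a along l
    have h3 : ∀ᶠ x in l, w x < δ := hsing.eventually (gt_mem_nhds hδpos)
    have h4 : C * δ ≤ ε := by
      have h5 : δ ≤ ε / (C + 1) := min_le_right _ _
      have h6 : C * δ ≤ C * (ε / (C + 1)) := mul_le_mul_of_nonneg_left h5 hCpos
      have h7 : C * (ε / (C + 1)) ≤ ε := by
        rw [mul_div_assoc', div_le_iff₀ (by linarith : (0:ℝ) < C + 1)]
        nlinarith
      linarith
    have hev : ∀ᶠ x in l, ENNReal.ofReal (|f x - f a| * w x) ≤ ENNReal.ofReal (3 * ε) := by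
      filter_upwards [h1', h2, h3] with x e1 e2 e3
      apply ENNReal.ofReal_le_ofReal
      have hwx := hw0 x
      have habs : |f x - f a| ≤ |f x - g x| + |g x - g a| + C := by
        have hsplit : f x - f a = (f x - g x) + (g x - g a) + (g a - f a) := by ring
        rw [hsplit]
        exact (abs_add_le _ _).trans (add_le_add_left (abs_add_le _ _) _)
      have hA : |f x - f a| * w x ≤ (|f x - g x| + |g x - g a| + C) * w x :=
        mul_le_mul_of_nonneg_right habs hwx
      have hD : |g x - g a| * w x ≤ 1 * w x := mul_le_mul_of_nonneg_right e2.le hwx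
      have hF : C * w x ≤ C * δ := mul_le_mul_of_nonneg_left e3.le hCpos
      have hδε : δ ≤ ε := min_le_left _ _
      nlinarith
    exact Filter.limsup_le_of_le (by isBoundedDefault) hev
  refine le_antisymm ?_ zero_le
  refine ENNReal.le_of_forall_pos_le_add fun ε hε _ => ?_
  have hεR : (0:ℝ) < (ε:ℝ) / 3 := by
    have : (0:ℝ) < ε := hε
    linarith
  have h := key ((ε:ℝ) / 3) hεR
  rw [show (3:ℝ) * ((ε:ℝ) / 3) = (ε:ℝ) by ring, ENNReal.ofReal_coe_nnreal] at h
  simpa using h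
end
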